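/- The optimized unraveling U_opt is sound for every U_opt-LL 3-eDCTRS that is non-LV or non-RV: if R is a 3-eDCTRS over a signature F that is ultra-left-linear w.r.t. U_opt and is non-LV or non-RV, then for all terms s, t ∈ T(F,V), s →*_{U_opt(R)} t implies s →*_R t. -/

import Mathlib

set_option maxHeartbeats 1000000

universe u

/-! ## Terms -/

inductive Term (α : Type u) : Type u where
  | var : ℕ → Term α
  | app : α → List (Term α) → Term α

namespace Term

variable {α : Type u}

/-- The list of variable occurrences of a term (left-to-right). -/
def varList : Term α → List ℕ
  | var x => [x]
  | app _ ts => ts.attach.foldr (fun t acc => varList t.1 ++ acc) []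
decreasing_by
  simp only [Term.app.sizeOf_spec]
  have := List.sizeOf_lt_of_mem t.2
  omega

/-- The list of (function symbol, number of arguments) occurrences of a term. -/
def apps : Term α → List (α × ℕ)
  | var _ => []
  | app f ts => (f, ts.length) :: ts.attach.foldr (fun t acc => apps t.1 ++ acc) []
decreasing_by
  simp only [Term.app.sizeOf_spec]
  have := List.sizeOf_lt_of_mem t.2
  omega

/-- `Var(t)`: the set of variables of a term. -/
def varFinset (t : Term α) : Finset ℕ := t.varList.toFinset

/-- All function symbols of the term belong to the signature `F`. -/
def overSig (F : Set α) (t : Term α) : Prop := ∀ p ∈ t.apps, p.1 ∈ F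

/-- `t ∈ T(F,V)`: all function symbols belong to `F` and are applied
according to their arities. -/
def inT (F : Set α) (ar : α → ℕ) (t : Term α) : Prop :=
  ∀ p ∈ t.apps, p.1 ∈ F ∧ ar p.1 = p.2

/-- A term is linear if no variable occurs twice in it. -/
def Linear (t : Term α) : Prop := t.varList.Nodup

/-- A term is ground if it contains no variable. -/
def Ground (t : Term α) : Prop := t.varList = []

/-- Applying a substitution to a term. -/
def subst (σ : ℕ → Term α) : Term α → Term α
  | var x => σ x
  | app f ts => app f (ts.attach.map (fun t => subst σ t.1))
decreasing_by
  simp only [Term.app.sizeOf_spec]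
  have := List.sizeOf_lt_of_mem t.2
  omega

def isVar : Term α → Prop
  | var _ => True
  | app _ _ => False

def root? : Term α → Option α
  | var _ => none
  | app f _ => some f

def args : Term α → List (Term α)
  | var _ => []
  | app _ ts => ts

end Term

def junkPair {α : Type u} : Term α × Term α := (Term.var 0, Term.var 0)

/-! ## Conditional rewrite rules -/

/-- An extended (oriented) conditional rewrite rule `l → r ⇐ s₁ ↠ t₁; …; s_k ↠ t_k`,
where `conds` is the list of pairs `(sᵢ, tᵢ)`. -/
structure ERule (α : Type u) : Type u where
  lhs : Term α
  rhs : Term α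
  conds : List (Term α × Term α)

namespace ERule

variable {α : Type u}

def nonLV (ρ : ERule α) : Prop := ¬ ρ.lhs.isVar
def nonRV (ρ : ERule α) : Prop := ¬ ρ.rhs.isVar

/-- `X_{j+1} = Var(l, t_1, …, t_j)` (0-based index `j`). -/
def Xset (ρ : ERule α) (j : ℕ) : Finset ℕ :=
  ρ.lhs.varFinset ∪ ((ρ.conds.take j).map (fun c => c.2.varFinset)).foldr (· ∪ ·) ∅

/-- `Y_{j+1} = Var(r, t_{j+1}, s_{j+2}, t_{j+2}, …, s_k, t_k)` (0-based index `j`). -/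
def Yset (ρ : ERule α) (j : ℕ) : Finset ℕ :=
  ρ.rhs.varFinset ∪ (ρ.conds.getD j junkPair).2.varFinset ∪
    ((ρ.conds.drop (j+1)).map (fun c => c.1.varFinset ∪ c.2.varFinset)).foldr (· ∪ ·) ∅

/-- `Z_i = X_i ∩ Y_i`. -/
def Zset (ρ : ERule α) (j : ℕ) : Finset ℕ := ρ.Xset j ∩ ρ.Yset j

/-- Determinism: `Var(sᵢ) ⊆ Var(l, t₁, …, t_{i-1})`. -/
def Det (ρ : ERule α) : Prop :=
  ∀ j < ρ.conds.length, (ρ.conds.getD j junkPair).1.varFinset ⊆ ρ.Xset j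

/-- Type 3: `Var(r) ⊆ Var(l, s₁, t₁, …, s_k, t_k)`. -/
def Type3 (ρ : ERule α) : Prop :=
  ρ.rhs.varFinset ⊆
    ρ.lhs.varFinset ∪ ((ρ.conds.map (fun c => c.1.varFinset ∪ c.2.varFinset)).foldr (· ∪ ·) ∅)

/-- Left-linearity of a rule. -/
def LL (ρ : ERule α) : Prop := ρ.lhs.Linear
/-- Right-linearity of a rule. -/
def RL (ρ : ERule α) : Prop := ρ.rhs.Linear
/-- Non-erasingness of a rule: `Var(l) ⊆ Var(r)`. -/
def NE (ρ : ERule α) : Prop := ρ.lhs.varFinset ⊆ ρ.rhs.varFinset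

/-- `EVar(l → r) = Var(r) \\ Var(l)`, the extra variables of a rule. -/
def extraVars (ρ : ERule α) : Finset ℕ := ρ.rhs.varFinset \ ρ.lhs.varFinset

/-- The inverted rule `(l → r ⇐ s₁ ↠ t₁; …; s_k ↠ t_k)⁻¹ = r → l ⇐ t_k ↠ s_k; …; t₁ ↠ s₁`. -/
def inv (ρ : ERule α) : ERule α :=
  ⟨ρ.rhs, ρ.lhs, (ρ.conds.map (fun c => (c.2, c.1))).reverse⟩

def allVarFinset (ρ : ERule α) : Finset ℕ :=
  ρ.lhs.varFinset ∪ ρ.rhs.varFinset ∪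
    ((ρ.conds.map (fun c => c.1.varFinset ∪ c.2.varFinset)).foldr (· ∪ ·) ∅)

/-- A number strictly larger than every variable of the rule; used to pick fresh variables. -/
def freshBase (ρ : ERule α) : ℕ := ρ.allVarFinset.sup id + 1

/-- All terms of the rule use only symbols of `F`. -/
def overSig (F : Set α) (ρ : ERule α) : Prop :=
  ρ.lhs.overSig F ∧ ρ.rhs.overSig F ∧ ∀ c ∈ ρ.conds, c.1.overSig F ∧ c.2.overSig F

/-- All terms of the rule are in `T(F,V)` (symbols of `F`, arity-correct). -/
def inT (F : Set α) (ar : α → ℕ) (ρ : ERule α) : Prop :=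
  ρ.lhs.inT F ar ∧ ρ.rhs.inT F ar ∧ ∀ c ∈ ρ.conds, c.1.inT F ar ∧ c.2.inT F ar

end ERule

/-! ## Reduction relations -/

/-- One-hole contexts. -/
inductive Ctx (α : Type u) : Type u where
  | hole : Ctx α
  | app : α → List (Term α) → Ctx α → List (Term α) → Ctx α

def Ctx.plug {α : Type u} : Ctx α → Term α → Term α
  | .hole, t => t
  | .app f pre c post, t => .app f (pre ++ c.plug t :: post)

/-- The approximations `→_{(n),R}` of the reduction relation of an oriented eCTRS. -/
def RedN {α : Type u} (R : Set (ERule α)) : ℕ → Term α → Term α → Prop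
  | 0 => fun _ _ => False
  | n + 1 => fun s t =>
      RedN R n s t ∨
      ∃ ρ ∈ R, ∃ C : Ctx α, ∃ σ : ℕ → Term α,
        s = C.plug (ρ.lhs.subst σ) ∧ t = C.plug (ρ.rhs.subst σ) ∧
        ∀ c ∈ ρ.conds, Relation.ReflTransGen (RedN R n) (c.1.subst σ) (c.2.subst σ)

/-- The reduction relation `→_R` of an oriented eCTRS. -/
def Red {α : Type u} (R : Set (ERule α)) (s t : Term α) : Prop := ∃ n, RedN R n s t

/-- `→*_R`. -/
def RedStar {α : Type u} (R : Set (ERule α)) : Term α → Term α → Prop :=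
  Relation.ReflTransGen (Red R)

/-- The approximations of the reduction relation of a join CTRS
(conditions interpreted as joinability). -/
def JRedN {α : Type u} (R : Set (ERule α)) : ℕ → Term α → Term α → Prop
  | 0 => fun _ _ => False
  | n + 1 => fun s t =>
      JRedN R n s t ∨
      ∃ ρ ∈ R, ∃ C : Ctx α, ∃ σ : ℕ → Term α,
        s = C.plug (ρ.lhs.subst σ) ∧ t = C.plug (ρ.rhs.subst σ) ∧
        ∀ c ∈ ρ.conds, ∃ w, Relation.ReflTransGen (JRedN R n) (c.1.subst σ) w ∧
          Relation.ReflTransGen (JRedN R n) (c.2.subst σ) w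

/-- The reduction relation of a join CTRS. -/
def JRed {α : Type u} (R : Set (ERule α)) (s t : Term α) : Prop := ∃ n, JRedN R n s t

def JRedStar {α : Type u} (R : Set (ERule α)) : Term α → Term α → Prop :=
  Relation.ReflTransGen (JRed R)

/-- The underlying unconditional system `R_u`. -/
def Ru {α : Type u} (R : Set (ERule α)) : Set (ERule α) :=
  (fun ρ : ERule α => ⟨ρ.lhs, ρ.rhs, []⟩) '' R

/-- Normal form w.r.t. a system. -/
def IsNF {α : Type u} (R : Set (ERule α)) (t : Term α) : Prop := ∀ w, ¬ Red R t w

/-! ## Unravelings for deterministic CTRSs -/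

/-- The fixed-order sequence of a finite set of variables. -/
def seqOf (s : Finset ℕ) : List ℕ := s.sort (· ≤ ·)

/-- `U(t, x⃗)`: a U symbol applied to a term followed by a sequence of variables. -/
def mkU {α : Type u} (f : α) (t : Term α) (xs : List ℕ) : Term α :=
  .app f (t :: xs.map Term.var)

/-- Generic sequential unraveling of a single deterministic rule, where `carry j` is
the variable sequence carried by the `j`-th U symbol. -/
def unravelWith {α : Type u} (carry : ℕ → List ℕ) (u : ℕ → α) (ρ : ERule α) :
    List (ERule α) :=
  (List.range (ρ.conds.length + 1)).map (fun j =>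
    ⟨ if j = 0 then ρ.lhs else mkU (u (j-1)) (ρ.conds.getD (j-1) junkPair).2 (carry (j-1)),
      if j < ρ.conds.length then mkU (u j) (ρ.conds.getD j junkPair).1 (carry j) else ρ.rhs,
      [] ⟩)

/-- Ohlebusch's unraveling `U` of a single rule (carrying `X⃗ᵢ`). -/
def unravelU {α : Type u} (u : ℕ → α) (ρ : ERule α) : List (ERule α) :=
  unravelWith (fun j => seqOf (ρ.Xset j)) u ρ

/-- The optimized unraveling `U_opt` of a single rule (carrying `Z⃗ᵢ`). -/
def unravelOpt {α : Type u} (u : ℕ → α) (ρ : ERule α) : List (ERule α) :=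
  unravelWith (fun j => seqOf (ρ.Zset j)) u ρ

/-- `U(R)`. -/
def USys {α : Type u} (u : ERule α → ℕ → α) (R : Set (ERule α)) : Set (ERule α) :=
  { q | ∃ ρ ∈ R, q ∈ unravelU (u ρ) ρ }

/-- `U_opt(R)`. -/
def UoptSys {α : Type u} (u : ERule α → ℕ → α) (R : Set (ERule α)) : Set (ERule α) :=
  { q | ∃ ρ ∈ R, q ∈ unravelOpt (u ρ) ρ }

/-- The U symbols introduced for the rules of `R`. -/
def USymbols {α : Type u} (u : ERule α → ℕ → α) (R : Set (ERule α)) : Set α :=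
  { a | ∃ ρ ∈ R, ∃ i < ρ.conds.length, a = u ρ i }

/-- Freshness of the U symbols: they do not occur in `F` and are pairwise distinct. -/
def UFresh {α : Type u} (F : Set α) (u : ERule α → ℕ → α) (R : Set (ERule α)) : Prop :=
  (∀ ρ ∈ R, ∀ i < ρ.conds.length, u ρ i ∉ F) ∧
  (∀ ρ ∈ R, ∀ ρ' ∈ R, ∀ i < ρ.conds.length, ∀ j < ρ'.conds.length,
      u ρ i = u ρ' j → ρ = ρ' ∧ i = j)

/-! ## Positions, parallel reduction, EV-safe reduction -/

abbrev Pos := List ℕ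

/-- Subterm at a position. -/
def Term.sub? {α : Type u} : Pos → Term α → Option (Term α)
  | [], t => some t
  | _ :: _, .var _ => none
  | i :: p, .app _ ts => (ts[i]?).bind (Term.sub? p)

/-- Replacing the subterm at a position by `w`. -/
def Term.replaceAt {α : Type u} (w : Term α) : Pos → Term α → Term α
  | [], _ => w
  | _ :: _, .var x => .var x
  | i :: p, .app f ts =>
      .app f (ts.mapIdx (fun j s => if j = i then Term.replaceAt w p s else s))

/-- `Pos_F(t)`: non-variable positions of `t`. -/
def PosF {α : Type u} (t : Term α) : Set Pos :=
  { p | ∃ f ts, Term.sub? p t = some (Term.app f ts) }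

/-- `Pos_V(t)`: variable positions of `t`. -/
def PosV {α : Type u} (t : Term α) : Set Pos :=
  { p | ∃ x, Term.sub? p t = some (Term.var x) }

/-- One rewrite step of an eTRS at position `p`. -/
def RedAt {α : Type u} (R : Set (ERule α)) (p : Pos) (s t : Term α) : Prop :=
  ∃ ρ ∈ R, ρ.conds = [] ∧ ∃ σ : ℕ → Term α,
    Term.sub? p s = some (ρ.lhs.subst σ) ∧ t = Term.replaceAt (ρ.rhs.subst σ) p s

/-- Two positions are parallel. -/
def ParallelPos (p q : Pos) : Prop := ¬ p <+: q ∧ ¬ q <+: p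

/-- A sequence of single steps at the listed positions. -/
inductive RedSeqAt {α : Type u} (R : Set (ERule α)) : List Pos → Term α → Term α → Prop
  | nil (t : Term α) : RedSeqAt R [] t t
  | cons {ps s s' t} (p : Pos) : RedAt R p s s' → RedSeqAt R ps s' t →
      RedSeqAt R (p :: ps) s t

/-- One parallel rewrite step contracting the (pairwise parallel) positions in `P`. -/
def ParStep {α : Type u} (R : Set (ERule α)) (P : List Pos) (s t : Term α) : Prop :=
  P.Pairwise ParallelPos ∧ RedSeqAt R P s t

/-- The parallel reduction `⇉_R`. -/
def ParRed {α : Type u} (R : Set (ERule α)) (s t : Term α) : Prop :=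
  ∃ P, ParStep R P s t

/-- Parallel reduction where every contracted position is at or below a position of `Q`. -/
def ParRedBelow {α : Type u} (R : Set (ERule α)) (Q : Set Pos) (s t : Term α) : Prop :=
  ∃ P, ParStep R P s t ∧ ∀ p ∈ P, ∃ q ∈ Q, q <+: p

/-- `n`-fold composition of a relation. -/
def NFold {β : Type*} (r : β → β → Prop) : ℕ → β → β → Prop
  | 0 => Eq
  | n + 1 => fun a c => ∃ b, r a b ∧ NFold r n b c

/-- The update of the set of basic positions w.r.t. extra variables after a rewrite step
at position `p` with rule `l → r`. -/
def nextB {α : Type u} (B : Set Pos) (p : Pos) (l r : Term α) : Set Pos :=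
  { q | q ∈ B ∧ ¬ p <+: q }
  ∪ { q | ∃ q' ∈ PosF r, q = p ++ q' }
  ∪ { q | ∃ pv p' q', pv ∈ PosV l ∧ Term.sub? pv l = Term.sub? p' r ∧
        (p ++ pv ++ q') ∈ B ∧ q = p ++ p' ++ q' }

/-- Reduction sequences of an eTRS based on a set `B` of positions w.r.t. extra
variables, where additionally every term substituted for an extra variable of the
applied rule satisfies `T` (EV-instantiation on `T`). -/
inductive EVSeq {α : Type u} (R : Set (ERule α)) (T : Term α → Prop) :
    Set Pos → Term α → Term α → Prop
  | refl (B : Set Pos) (t : Term α) : EVSeq R T B t t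
  | step {B : Set Pos} {s s' t : Term α} (p : Pos) (ρ : ERule α) (σ : ℕ → Term α) :
      ρ ∈ R → ρ.conds = [] →
      Term.sub? p s = some (ρ.lhs.subst σ) →
      s' = Term.replaceAt (ρ.rhs.subst σ) p s →
      p ∈ B →
      (∀ x ∈ ρ.extraVars, T (σ x)) →
      EVSeq R T (nextB B p ρ.lhs ρ.rhs) s' t →
      EVSeq R T B s t

/-- An EV-safe reduction sequence `s ↪*_R t`, EV-instantiated on `T`. -/
def EVSafeI {α : Type u} (R : Set (ERule α)) (T : Term α → Prop) (s t : Term α) : Prop :=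
  EVSeq R T (PosF s) s t

/-- An EV-safe reduction sequence `s ↪*_R t`. -/
def EVSafe {α : Type u} (R : Set (ERule α)) (s t : Term α) : Prop :=
  EVSeq R (fun _ => True) (PosF s) s t

/-! ## Tree homomorphisms -/

/-- Applying the tree homomorphism determined by `h` to a term:
`φ(f(t₁, …, t_n)) = h(f){xᵢ ↦ φ(tᵢ)}` (the formal variable `xᵢ` is the variable `i - 1`). -/
def applyHom {α : Type u} (h : α → Term α) : Term α → Term α
  | .var x => .var x
  | .app f ts =>
      Term.subst (fun i => (ts.attach.map (fun s => applyHom h s.1)).getD i (Term.var i)) (h f)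
decreasing_by
  simp only [Term.app.sizeOf_spec]
  have := List.sizeOf_lt_of_mem s.2
  omega

/-- The image of a rule under a tree homomorphism. -/
def homRule {α : Type u} (h : α → Term α) (ρ : ERule α) : ERule α :=
  ⟨applyHom h ρ.lhs, applyHom h ρ.rhs,
    ρ.conds.map (fun c => (applyHom h c.1, applyHom h c.2))⟩

/-- The image of an eCTRS under a tree homomorphism. -/
def homSys {α : Type u} (h : α → Term α) (R : Set (ERule α)) : Set (ERule α) :=
  homRule h '' R

/-- `h` determines a tree homomorphism from `T(G₁,V)` to `T(G₂,V)` (w.r.t. arity `ar`):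
for `f ∈ G₁` of arity `n`, `h f` is a term over `G₂` with variables among `x₁, …, x_n`. -/
def TreeHom {α : Type u} (ar : α → ℕ) (G₁ G₂ : Set α) (h : α → Term α) : Prop :=
  ∀ f ∈ G₁, (h f).overSig G₂ ∧ ∀ x ∈ (h f).varList, x < ar f

/-- `F`-identical tree homomorphism. -/
def FIdentical {α : Type u} (ar : α → ℕ) (F : Set α) (h : α → Term α) : Prop :=
  ∀ f ∈ F, h f = Term.app f ((List.range (ar f)).map Term.var)

/-- Non-erasing tree homomorphism (on the signature `G`). -/
def HomNonErasing {α : Type u} (ar : α → ℕ) (G : Set α) (h : α → Term α) : Prop :=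
  ∀ f ∈ G, (h f).varFinset = Finset.range (ar f)

/-- The homomorphism is EV-preserving for the eTRS `S`. -/
def EVPreserving {α : Type u} (h : α → Term α) (S : Set (ERule α)) : Prop :=
  ∀ ρ ∈ S, (homRule h ρ).extraVars = ρ.extraVars

/-! ## Unravelings for join and normal CTRSs, and `Norm` -/

/-- Marchiori-style unraveling `U_J` of a join conditional rule. -/
def unravelJ {α : Type u} (uj : ERule α → α) (ρ : ERule α) : List (ERule α) :=
  if ρ.conds.isEmpty then [ρ]
  else
    [ ⟨ρ.lhs,
        Term.app (uj ρ) ((ρ.conds.foldr (fun c acc => c.1 :: c.2 :: acc) []) ++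
          (seqOf ρ.lhs.varFinset).map Term.var), []⟩,
      ⟨Term.app (uj ρ)
          (((List.range ρ.conds.length).foldr
              (fun j acc => Term.var (ρ.freshBase + j) :: Term.var (ρ.freshBase + j) :: acc) []) ++
            (seqOf ρ.lhs.varFinset).map Term.var),
        ρ.rhs, []⟩ ]

def UJSys {α : Type u} (uj : ERule α → α) (R : Set (ERule α)) : Set (ERule α) :=
  { q | ∃ ρ ∈ R, q ∈ unravelJ uj ρ }

/-- Unraveling `U_N` of a normal conditional rule. -/
def unravelN {α : Type u} (un : ERule α → α) (ρ : ERule α) : List (ERule α) :=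
  if ρ.conds.isEmpty then [ρ]
  else
    [ ⟨ρ.lhs,
        Term.app (un ρ) (ρ.conds.map Prod.fst ++ (seqOf ρ.lhs.varFinset).map Term.var), []⟩,
      ⟨Term.app (un ρ) (ρ.conds.map Prod.snd ++ (seqOf ρ.lhs.varFinset).map Term.var),
        ρ.rhs, []⟩ ]

def UNSys {α : Type u} (un : ERule α → α) (R : Set (ERule α)) : Set (ERule α) :=
  { q | ∃ ρ ∈ R, q ∈ unravelN un ρ }

/-- `Norm` on rules: `l → r ⇐ eq(s₁,t₁) ↠ eq(⊤,⊤); …; eq(s_k,t_k) ↠ eq(⊤,⊤)`. -/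
def normRule {α : Type u} (eqS topS : α) (ρ : ERule α) : ERule α :=
  ⟨ρ.lhs, ρ.rhs,
    ρ.conds.map (fun c =>
      (Term.app eqS [c.1, c.2], Term.app eqS [Term.app topS [], Term.app topS []]))⟩

/-- `Norm(R) = {eq(x,x) → eq(⊤,⊤)} ∪ {Norm(ρ) | ρ ∈ R}`. -/
def NormSys {α : Type u} (eqS topS : α) (R : Set (ERule α)) : Set (ERule α) :=
  insert
    ⟨Term.app eqS [Term.var 0, Term.var 0],
      Term.app eqS [Term.app topS [], Term.app topS []], []⟩
    (normRule eqS topS '' R)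

/-- A normal CTRS: a deterministic, non-LV CTRS all of whose condition right-hand
sides are ground normal forms w.r.t. `R_u`. -/
def NormalCTRS {α : Type u} (R : Set (ERule α)) : Prop :=
  ∀ ρ ∈ R, ρ.Det ∧ ρ.nonLV ∧ ∀ c ∈ ρ.conds, c.2.Ground ∧ IsNF (Ru R) c.2

/-! ### Auxiliary development for Statement 8 -/

namespace Term

variable {α : Type u}

private theorem attach_foldr_eq (l : List (Term α)) (g : Term α → List β) :
    l.attach.foldr (fun t acc => g t.1 ++ acc) [] = (l.map g).flatten := by
  induction l with
  | nil => simp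
  | cons a l ih => simp_all [List.attach_cons, List.foldr_map]

theorem my_induction {P : Term α → Prop} (hv : ∀ x, P (.var x))
    (ha : ∀ f ts, (∀ t ∈ ts, P t) → P (.app f ts)) : ∀ t, P t
  | .var x => hv x
  | .app f ts => ha f ts (fun t ht => my_induction hv ha t)
decreasing_by
  simp only [Term.app.sizeOf_spec]
  have := List.sizeOf_lt_of_mem ht
  omega

@[simp] theorem varList_var (x : ℕ) : (var x : Term α).varList = [x] := by
  rw [varList]

@[simp] theorem varList_app (f : α) (ts : List (Term α)) :
    (app f ts).varList = (ts.map varList).flatten := by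
  rw [varList, attach_foldr_eq]

@[simp] theorem apps_var (x : ℕ) : (var x : Term α).apps = [] := by rw [apps]

@[simp] theorem apps_app (f : α) (ts : List (Term α)) :
    (app f ts).apps = (f, ts.length) :: (ts.map apps).flatten := by
  rw [apps]
  congr 1
  induction ts with
  | nil => simp
  | cons a l ih => simp_all [List.attach_cons, List.foldr_map]

@[simp] theorem subst_var (σ : ℕ → Term α) (x : ℕ) : (var x : Term α).subst σ = σ x := by
  rw [subst]

@[simp] theorem subst_app (σ : ℕ → Term α) (f : α) (ts : List (Term α)) :
    (app f ts).subst σ = app f (ts.map (subst σ)) := by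
  rw [subst]; simp [List.attach_map_val]

@[simp] theorem mem_varFinset {x : ℕ} {t : Term α} : x ∈ t.varFinset ↔ x ∈ t.varList := by
  simp [varFinset]

theorem mem_varFinset_app {x : ℕ} {f : α} {ts : List (Term α)} :
    x ∈ (app f ts).varFinset ↔ ∃ t ∈ ts, x ∈ t.varFinset := by
  simp

theorem overSig_var {F : Set α} (x : ℕ) : (var x : Term α).overSig F := by
  intro p hp; simp at hp

theorem overSig_app {F : Set α} {f : α} {ts : List (Term α)} :
    (app f ts).overSig F ↔ f ∈ F ∧ ∀ t ∈ ts, t.overSig F := by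
  constructor
  · intro h
    refine ⟨h (f, ts.length) (by simp), fun t ht p hp => h p ?_⟩
    simp only [apps_app, List.mem_cons, List.mem_flatten]
    exact Or.inr ⟨t.apps, List.mem_map_of_mem ht, hp⟩
  · rintro ⟨hf, h⟩ p hp
    simp only [apps_app, List.mem_cons, List.mem_flatten, List.mem_map] at hp
    rcases hp with rfl | ⟨_, ⟨t, ht, rfl⟩, hp⟩
    · exact hf
    · exact h t ht p hp

/-- substitution only depends on values at variables of the term -/
theorem subst_congr {σ τ : ℕ → Term α} {t : Term α}
    (h : ∀ x ∈ t.varFinset, σ x = τ x) : t.subst σ = t.subst τ := by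
  induction t using my_induction with
  | hv x => simpa using h x (by simp)
  | ha f ts ih =>
      simp only [subst_app]
      congr 1
      refine List.map_congr_left (fun s hs => ih s hs ?_)
      intro x hx
      exact h x (mem_varFinset_app.2 ⟨s, hs, hx⟩)

theorem linear_app {f : α} {ts : List (Term α)} (h : (app f ts).Linear) :
    (∀ t ∈ ts, t.Linear) ∧
      ∀ i j (hi : i < ts.length) (hj : j < ts.length), i ≠ j →
        ∀ x, x ∈ ts[i].varFinset → x ∉ ts[j].varFinset := by
  have h' : ((ts.map varList).flatten).Nodup := by simpa [Linear] using h
  rw [List.nodup_flatten] at h'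
  obtain ⟨h1, h2⟩ := h'
  constructor
  · intro t ht
    exact h1 _ (List.mem_map_of_mem ht)
  · rw [List.pairwise_map] at h2
    rw [List.pairwise_iff_getElem] at h2
    intro i j hi hj hij x hx hx'
    simp only [mem_varFinset] at hx hx'
    rcases Nat.lt_or_ge i j with hlt | hge
    · exact h2 i j hi hj hlt hx hx'
    · exact h2 j i hj hi (Nat.lt_of_le_of_ne hge (Ne.symm hij)) hx' hx

end Term

/-! ### Finset foldr-union membership -/

theorem mem_foldr_union {β : Type*} {x : ℕ} {l : List β} {g : β → Finset ℕ} :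
    x ∈ (l.map g).foldr (· ∪ ·) (∅ : Finset ℕ) ↔ ∃ a ∈ l, x ∈ g a := by
  induction l with
  | nil => simp
  | cons a l ih => simp [ih]

namespace ERule

variable {α : Type u}

theorem mem_Xset {ρ : ERule α} {i x : ℕ} :
    x ∈ ρ.Xset i ↔ x ∈ ρ.lhs.varFinset ∨
      ∃ j, j < i ∧ j < ρ.conds.length ∧ x ∈ (ρ.conds.getD j junkPair).2.varFinset := by
  unfold Xset
  rw [Finset.mem_union, mem_foldr_union]
  constructor
  · rintro (h | ⟨c, hc, hx⟩)
    · exact Or.inl h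
    · rw [List.mem_take_iff_getElem] at hc
      obtain ⟨j, hj, rfl⟩ := hc
      refine Or.inr ⟨j, lt_of_lt_of_le hj inf_le_left, lt_of_lt_of_le hj inf_le_right, ?_⟩
      rwa [List.getD_eq_getElem _ _ (lt_of_lt_of_le hj inf_le_right)]
  · rintro (h | ⟨j, hji, hj, hx⟩)
    · exact Or.inl h
    · refine Or.inr ⟨ρ.conds[j], ?_, ?_⟩
      · rw [List.mem_take_iff_getElem]
        exact ⟨j, lt_inf_iff.2 ⟨hji, hj⟩, rfl⟩
      · rwa [List.getD_eq_getElem _ _ hj] at hx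

theorem mem_Yset {ρ : ERule α} {i x : ℕ} :
    x ∈ ρ.Yset i ↔ x ∈ ρ.rhs.varFinset ∨ x ∈ (ρ.conds.getD i junkPair).2.varFinset ∨
      ∃ j, i + 1 ≤ j ∧ j < ρ.conds.length ∧
        (x ∈ (ρ.conds.getD j junkPair).1.varFinset ∨
          x ∈ (ρ.conds.getD j junkPair).2.varFinset) := by
  unfold Yset
  rw [Finset.mem_union, Finset.mem_union, mem_foldr_union]
  constructor
  · rintro ((h | h) | ⟨c, hc, hx⟩)
    · exact Or.inl h
    · exact Or.inr (Or.inl h)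
    · rw [List.mem_drop_iff_getElem] at hc
      obtain ⟨j, hj, rfl⟩ := hc
      refine Or.inr (Or.inr ⟨i + 1 + j, by omega, by omega, ?_⟩)
      rw [List.getD_eq_getElem _ _ (show i + 1 + j < ρ.conds.length by omega)]
      simpa [Finset.mem_union] using hx
  · rintro (h | h | ⟨j, hij, hj, hx⟩)
    · exact Or.inl (Or.inl h)
    · exact Or.inl (Or.inr h)
    · refine Or.inr ⟨ρ.conds[j], ?_, ?_⟩
      · rw [List.mem_drop_iff_getElem]
        exact ⟨j - (i+1), by omega, by congr 1; omega⟩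
      · rw [List.getD_eq_getElem _ _ hj] at hx
        simpa [Finset.mem_union] using hx

end ERule

namespace ERule

variable {α : Type u}

/-- the `i`-th condition lhs -/
def scond (ρ : ERule α) (i : ℕ) : Term α := (ρ.conds.getD i junkPair).1
/-- the `i`-th condition rhs -/
def tcond (ρ : ERule α) (i : ℕ) : Term α := (ρ.conds.getD i junkPair).2

theorem mem_Xset' {ρ : ERule α} {i x : ℕ} :
    x ∈ ρ.Xset i ↔ x ∈ ρ.lhs.varFinset ∨
      ∃ j, j < i ∧ j < ρ.conds.length ∧ x ∈ (ρ.tcond j).varFinset := mem_Xset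

theorem Xset_zero (ρ : ERule α) : ρ.Xset 0 = ρ.lhs.varFinset := by
  ext x; rw [mem_Xset]
  simp

theorem Xset_mono {ρ : ERule α} {i i' : ℕ} (h : i ≤ i') : ρ.Xset i ⊆ ρ.Xset i' := by
  intro x hx
  rw [mem_Xset] at hx ⊢
  rcases hx with h' | ⟨j, h1, h2, h3⟩
  · exact Or.inl h'
  · exact Or.inr ⟨j, lt_of_lt_of_le h1 h, h2, h3⟩

theorem mem_Xset_succ {ρ : ERule α} {i x : ℕ} (hi : i < ρ.conds.length) :
    x ∈ ρ.Xset (i + 1) ↔ x ∈ ρ.Xset i ∨ x ∈ (ρ.tcond i).varFinset := by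
  rw [mem_Xset', mem_Xset']
  constructor
  · rintro (h | ⟨j, h1, h2, h3⟩)
    · exact Or.inl (Or.inl h)
    · rcases Nat.lt_or_ge j i with h' | h'
      · exact Or.inl (Or.inr ⟨j, h', h2, h3⟩)
      · have : j = i := by omega
        subst this; exact Or.inr h3
  · rintro ((h | ⟨j, h1, h2, h3⟩) | h)
    · exact Or.inl h
    · exact Or.inr ⟨j, by omega, h2, h3⟩
    · exact Or.inr ⟨i, by omega, hi, h⟩

theorem tcond_sub_Yset (ρ : ERule α) (i : ℕ) : (ρ.tcond i).varFinset ⊆ ρ.Yset i := by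
  intro x hx; rw [mem_Yset]; exact Or.inr (Or.inl hx)

theorem rhs_sub_Yset (ρ : ERule α) (i : ℕ) : ρ.rhs.varFinset ⊆ ρ.Yset i := by
  intro x hx; rw [mem_Yset]; exact Or.inl hx

theorem scond_succ_sub_Yset {ρ : ERule α} {i : ℕ} (h : i + 1 < ρ.conds.length) :
    (ρ.scond (i + 1)).varFinset ⊆ ρ.Yset i := by
  intro x hx; rw [mem_Yset]
  exact Or.inr (Or.inr ⟨i + 1, le_refl _, h, Or.inl hx⟩)

theorem Yset_succ_sub {ρ : ERule α} {i : ℕ} (h : i + 1 < ρ.conds.length) :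
    ρ.Yset (i + 1) ⊆ ρ.Yset i := by
  intro x hx
  rw [mem_Yset] at hx ⊢
  rcases hx with h' | h' | ⟨j, h1, h2, h3⟩
  · exact Or.inl h'
  · exact Or.inr (Or.inr ⟨i + 1, le_refl _, h, Or.inr h'⟩)
  · exact Or.inr (Or.inr ⟨j, by omega, h2, h3⟩)

end ERule

@[simp] theorem seqOf_nodup (s : Finset ℕ) : (seqOf s).Nodup := Finset.sort_nodup _ _

@[simp] theorem mem_seqOf {x : ℕ} {s : Finset ℕ} : x ∈ seqOf s ↔ x ∈ s := Finset.mem_sort _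

theorem mkU_subst {α : Type u} (σ : ℕ → Term α) (f : α) (t : Term α) (xs : List ℕ) :
    (mkU f t xs).subst σ = Term.app f (t.subst σ :: xs.map σ) := by
  simp [mkU, List.map_map, Function.comp]

theorem varList_mkU {α : Type u} (f : α) (t : Term α) (xs : List ℕ) :
    (mkU f t xs).varList = t.varList ++ xs := by
  simp only [mkU, Term.varList_app, List.map_cons, List.map_map, List.flatten_cons]
  congr 1
  have : Term.varList ∘ (Term.var (α := α)) = fun x => [x] := by
    funext x; simp [Function.comp]
  rw [this]
  induction xs with
  | nil => simp
  | cons a l ih => simp [ih]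

/-- consequences of left-linearity of a U-rule's lhs -/
theorem linear_mkU {α : Type u} {f : α} {t : Term α} {xs : List ℕ}
    (h : (mkU f t xs).Linear) : t.Linear ∧ ∀ x ∈ t.varFinset, x ∉ xs := by
  have h' := h
  unfold Term.Linear at h'
  rw [varList_mkU, List.nodup_append] at h'
  exact ⟨h'.1, fun x hx hxs => h'.2.2 x (by simpa using hx) x hxs rfl⟩

/-! ### Reduction machinery -/

section Red

variable {α : Type u} {R : Set (ERule α)}

theorem redN_mono : ∀ {m n : ℕ}, m ≤ n → ∀ {s t : Term α}, RedN R m s t → RedN R n s t := by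
  intro m
  induction m with
  | zero => intro n _ s t h; exact absurd h (by simp [RedN])
  | succ m ih =>
      intro n hmn s t h
      obtain ⟨n', rfl⟩ : ∃ n', n = n' + 1 := ⟨n - 1, by omega⟩
      have hmn' : m ≤ n' := by omega
      rcases h with h | ⟨ρ, hρ, C, σ, hs, ht, hc⟩
      · exact Or.inl (ih hmn' h)
      · exact Or.inr ⟨ρ, hρ, C, σ, hs, ht, fun c hc' =>
          Relation.ReflTransGen.mono (fun a b => ih hmn') _ _ (hc c hc')⟩

theorem redN_ctx {n : ℕ} {a b : Term α} (h : RedN R n a b) (f : α)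
    (pre post : List (Term α)) :
    RedN R n (.app f (pre ++ a :: post)) (.app f (pre ++ b :: post)) := by
  induction n generalizing a b with
  | zero => exact absurd h (by simp [RedN])
  | succ n ih =>
      rcases h with h | ⟨ρ, hρ, C, σ, hs, ht, hc⟩
      · exact Or.inl (ih h)
      · subst hs ht
        exact Or.inr ⟨ρ, hρ, Ctx.app f pre C post, σ, rfl, rfl, hc⟩

theorem red_ctx {a b : Term α} (h : Red R a b) (f : α) (pre post : List (Term α)) :
    Red R (.app f (pre ++ a :: post)) (.app f (pre ++ b :: post)) := by
  obtain ⟨n, h⟩ := h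
  exact ⟨n, redN_ctx h f pre post⟩

theorem redstar_ctx {a b : Term α} (h : RedStar R a b) (f : α) (pre post : List (Term α)) :
    RedStar R (.app f (pre ++ a :: post)) (.app f (pre ++ b :: post)) :=
  Relation.ReflTransGen.lift (p := Red R) (fun x => Term.app f (pre ++ x :: post))
    (fun _ _ hr => red_ctx hr f pre post) _ _ h

theorem redstar_app_pointwise' (f : α) :
    ∀ (pre as bs : List (Term α)), as.length = bs.length →
      (∀ i (h : i < as.length) (h' : i < bs.length), RedStar R as[i] bs[i]) →
      RedStar R (.app f (pre ++ as)) (.app f (pre ++ bs)) := by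
  intro pre as
  induction as generalizing pre with
  | nil =>
      intro bs hl _
      have : bs = [] := by simpa using hl.symm
      subst this; exact Relation.ReflTransGen.refl
  | cons a as ih =>
      intro bs hl hp
      obtain ⟨b, bs, rfl⟩ : ∃ b bs', bs = b :: bs' := by
        cases bs with
        | nil => simp at hl
        | cons b bs => exact ⟨b, bs, rfl⟩
      have h1 : RedStar R (.app f (pre ++ a :: as)) (.app f (pre ++ b :: as)) :=
        redstar_ctx (hp 0 (by simp) (by simp)) f pre as
      have h2 : RedStar R (.app f ((pre ++ [b]) ++ as)) (.app f ((pre ++ [b]) ++ bs)) :=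
        ih (pre ++ [b]) bs (by simpa using hl)
          (fun i hi hi' => hp (i + 1) (by simpa using hi) (by simpa using hi'))
      unfold RedStar; simpa using h1.trans (by unfold RedStar at h2; simpa using h2)

theorem redstar_app_pointwise (f : α) (as bs : List (Term α)) (hl : as.length = bs.length)
    (hp : ∀ i (h : i < as.length) (h' : i < bs.length), RedStar R as[i] bs[i]) :
    RedStar R (.app f as) (.app f bs) := by
  simpa using redstar_app_pointwise' f [] as bs hl hp

theorem redstar_bounded {a b : Term α} (h : RedStar R a b) :
    ∃ n, Relation.ReflTransGen (RedN R n) a b := by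
  induction h with
  | refl => exact ⟨0, Relation.ReflTransGen.refl⟩
  | tail _ hbc ih =>
      obtain ⟨n₁, h₁⟩ := ih
      obtain ⟨n₂, h₂⟩ := hbc
      exact ⟨max n₁ n₂, Relation.ReflTransGen.tail
        (Relation.ReflTransGen.mono (fun _ _ h => redN_mono (le_max_left _ _) h) _ _ h₁)
        (redN_mono (le_max_right _ _) h₂)⟩

/-- a root conditional rewrite step -/
theorem red_rule {ρ : ERule α} (hρ : ρ ∈ R) (σ : ℕ → Term α)
    (hc : ∀ c ∈ ρ.conds, RedStar R (c.1.subst σ) (c.2.subst σ)) :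
    Red R (ρ.lhs.subst σ) (ρ.rhs.subst σ) := by
  have : ∀ cs : List (Term α × Term α),
      (∀ c ∈ cs, RedStar R (c.1.subst σ) (c.2.subst σ)) →
      ∃ n, ∀ c ∈ cs, Relation.ReflTransGen (RedN R n) (c.1.subst σ) (c.2.subst σ) := by
    clear hρ hc
    intro cs hc
    induction cs with
    | nil => exact ⟨0, by simp⟩
    | cons c cs ih =>
        obtain ⟨n₁, h₁⟩ := ih (fun c hc' => hc c (List.mem_cons_of_mem _ hc'))
        obtain ⟨n₂, h₂⟩ := redstar_bounded (hc c List.mem_cons_self)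
        refine ⟨max n₁ n₂, ?_⟩
        intro c' hc'
        rcases List.mem_cons.1 hc' with rfl | hm
        · exact Relation.ReflTransGen.mono (fun _ _ h => redN_mono (le_max_right _ _) h) _ _ h₂
        · exact Relation.ReflTransGen.mono (fun _ _ h => redN_mono (le_max_left _ _) h) _ _ (h₁ c' hm)
  obtain ⟨n, hn⟩ := this ρ.conds hc
  exact ⟨n + 1, Or.inr ⟨ρ, hρ, Ctx.hole, σ, rfl, rfl, hn⟩⟩

end Red

/-! ### The simulation relation `Good` -/

section GoodDef

variable {α : Type u}

/-- `Good F R u w v` : the mixed term `w` can be back-translated to the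
original term `v`, in the sense that `v` rewrites in `R` to any completed
value of `w`. -/
inductive Good (F : Set α) (R : Set (ERule α)) (u : ERule α → ℕ → α) :
    Term α → Term α → Prop where
  | var (x : ℕ) : Good F R u (.var x) (.var x)
  | appF {f : α} {ws vs : List (Term α)} :
      f ∈ F → ws.length = vs.length →
      (∀ i (h : i < ws.length) (h' : i < vs.length), Good F R u ws[i] vs[i]) →
      Good F R u (.app f ws) (.app f vs)
  | appU {ρ : ERule α} {i : ℕ} {w0 : Term α} {ws : List (Term α)} {v v0 : Term α}
      {τ : ℕ → Term α} :
      ρ ∈ R → i < ρ.conds.length →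
      ws.length = (seqOf (ρ.Zset i)).length →
      RedStar R v (ρ.lhs.subst τ) →
      (∀ j, j < i → RedStar R ((ρ.scond j).subst τ) ((ρ.tcond j).subst τ)) →
      Good F R u w0 v0 →
      RedStar R ((ρ.scond i).subst τ) v0 →
      (∀ j (h : j < ws.length) (h' : j < (seqOf (ρ.Zset i)).length),
        Good F R u ws[j] (τ ((seqOf (ρ.Zset i))[j]))) →
      Good F R u (.app (u ρ i) (w0 :: ws)) v
  | closure {w v v' : Term α} : RedStar R v v' → Good F R u w v' → Good F R u w v

variable {F : Set α} {R : Set (ERule α)} {u : ERule α → ℕ → α}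

@[simp] theorem subst_var_id (t : Term α) : t.subst Term.var = t := by
  induction t using Term.my_induction with
  | hv x => simp
  | ha f ts ih =>
      simp only [Term.subst_app]
      rw [List.map_congr_left ih]
      simp

theorem good_subst {t : Term α} (ht : t.overSig F) {σ τ : ℕ → Term α}
    (h : ∀ x ∈ t.varFinset, Good F R u (σ x) (τ x)) :
    Good F R u (t.subst σ) (t.subst τ) := by
  induction t using Term.my_induction with
  | hv x => simpa using h x (by simp)
  | ha f ts ih =>
      rw [Term.overSig_app] at ht
      simp only [Term.subst_app]
      refine Good.appF ht.1 (by simp) ?_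
      intro i hi hi'
      simp only [List.getElem_map]
      simp only [List.length_map] at hi
      refine ih _ (List.getElem_mem hi) (ht.2 _ (List.getElem_mem hi)) ?_
      intro x hx
      exact h x (Term.mem_varFinset_app.2 ⟨_, List.getElem_mem hi, hx⟩)

theorem good_refl {t : Term α} (ht : t.overSig F) : Good F R u t t := by
  have h : Good F R u (t.subst Term.var) (t.subst Term.var) :=
    good_subst (R := R) (u := u) (σ := Term.var) (τ := Term.var) ht (fun x _ => Good.var x)
  simpa using h

theorem good_overF (hfresh1 : ∀ ρ ∈ R, ∀ i < ρ.conds.length, u ρ i ∉ F)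
    {w v : Term α} (h : Good F R u w v) (hw : w.overSig F) : RedStar R v w := by
  induction h with
  | var x => exact Relation.ReflTransGen.refl
  | appF hf hl hg ih =>
      rw [Term.overSig_app] at hw
      refine redstar_app_pointwise _ _ _ hl.symm ?_
      intro i hi hi'
      exact ih i hi' hi (hw.2 _ (List.getElem_mem hi'))
  | appU hρ hi hl hred hconds hg0 hs0 hargs ih0 ihargs =>
      rw [Term.overSig_app] at hw
      exact absurd hw.1 (hfresh1 _ hρ _ hi)
  | closure hred _ ih => exact hred.trans (ih hw)
end GoodDef

section GoodLemmas

variable {α : Type u} {F : Set α} {R : Set (ERule α)} {u : ERule α → ℕ → α}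

/-- helper for the variable case of `good_decomp` -/
theorem good_decomp_var {w v : Term α} (h : Good F R u w v) (z : ℕ) (σ : ℕ → Term α)
    (heq : w = Term.subst σ (Term.var z)) :
    ∃ τ, RedStar R v (Term.subst τ (Term.var z)) ∧
      ∀ x ∈ (Term.var z : Term α).varFinset, Good F R u (σ x) (τ x) := by
  refine ⟨fun _ => v, by simp only [Term.subst_var]; exact Relation.ReflTransGen.refl, ?_⟩
  intro x hx
  simp only [Term.mem_varFinset, Term.varList_var, List.mem_singleton] at hx
  subst hx
  simp only [Term.subst_var] at heq
  rw [← heq]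
  exact h

/-- Decomposition: a `Good`-predecessor of an instance of a linear term over `F`
is (up to `→*_R`) an instance of the same term. -/
theorem good_decomp (hfresh1 : ∀ ρ ∈ R, ∀ i < ρ.conds.length, u ρ i ∉ F)
    {w v : Term α} (h : Good F R u w v) :
    ∀ (t : Term α) (σ : ℕ → Term α), t.overSig F → t.Linear → w = t.subst σ →
      ∃ τ, RedStar R v (t.subst τ) ∧ ∀ x ∈ t.varFinset, Good F R u (σ x) (τ x) := by
  induction h with
  | var y =>
      intro t σ hsig hlin heq
      cases t with
      | var z => exact good_decomp_var (Good.var y) z σ heq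
      | app g ts => simp at heq
  | appF hf hl hg ih =>
      rename_i f ws vs
      intro t σ hsig hlin heq
      cases t with
      | var z => exact good_decomp_var (Good.appF hf hl hg) z σ heq
      | app g ts =>
          simp only [Term.subst_app, Term.app.injEq] at heq
          obtain ⟨rfl, rfl⟩ := heq
          rw [Term.overSig_app] at hsig
          obtain ⟨hlin1, hlin2⟩ := Term.linear_app hlin
          have hts : ∀ i (hi : i < ts.length),
              ∃ τ, RedStar R (vs[i]'(by simp only [List.length_map] at hl; omega)) ((ts[i]).subst τ) ∧
                ∀ x ∈ (ts[i]).varFinset, Good F R u (σ x) (τ x) := by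
            intro i hi
            have hi1 : i < (ts.map (Term.subst σ)).length := by simpa using hi
            have hi2 : i < vs.length := by
              have := hl; simp only [List.length_map] at this; omega
            have := ih i hi1 hi2 ts[i] σ (hsig.2 _ (List.getElem_mem hi))
              (hlin1 _ (List.getElem_mem hi)) (by simp)
            simpa using this
          choose τs hτ1 hτ2 using hts
          classical
          set τf : ℕ → Term α := fun x =>
            if hx : ∃ i, ∃ hi : i < ts.length, x ∈ (ts[i]).varFinset
              then τs hx.choose hx.choose_spec.choose x else Term.var x with hτf
          have key : ∀ i (hi : i < ts.length), ∀ x ∈ (ts[i]).varFinset, τf x = τs i hi x := by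
            intro i hi x hx
            have hex : ∃ i, ∃ hi : i < ts.length, x ∈ (ts[i]).varFinset := ⟨i, hi, hx⟩
            rw [hτf]
            simp only []
            rw [dif_pos hex]
            have hi' := hex.choose_spec.choose
            have hx' := hex.choose_spec.choose_spec
            by_cases hii : hex.choose = i
            · subst hii; rfl
            · exact absurd hx (hlin2 hex.choose i hi' hi hii x hx')
          have hlen : ts.length = vs.length := by simpa using hl
          refine ⟨τf, ?_, ?_⟩
          · simp only [Term.subst_app]
            refine redstar_app_pointwise f vs (ts.map (Term.subst τf)) (by simp [hlen]) ?_
            intro i hig hig'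
            have hi : i < ts.length := by omega
            have : (ts.map (Term.subst τf))[i] = (ts[i]).subst τf := by simp
            rw [this, Term.subst_congr (fun x hx => key i hi x hx)]
            exact hτ1 i hi
          · intro x hx
            rw [Term.mem_varFinset_app] at hx
            obtain ⟨t', ht', hx⟩ := hx
            obtain ⟨i, hi, rfl⟩ := List.mem_iff_getElem.1 ht'
            rw [key i hi x hx]
            exact hτ2 i hi x hx
  | appU hρ hi hlen hred hconds hg0 hs0 hargs ih0 ihargs =>
      intro t σ hsig hlin heq
      cases t with
      | var z => exact good_decomp_var (Good.appU hρ hi hlen hred hconds hg0 hs0 hargs) z σ heq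
      | app g ts =>
          simp only [Term.subst_app, Term.app.injEq] at heq
          obtain ⟨rfl, -⟩ := heq
          rw [Term.overSig_app] at hsig
          exact absurd hsig.1 (hfresh1 _ hρ _ hi)
  | closure hred hgood ih =>
      intro t σ hsig hlin heq
      cases t with
      | var z => exact good_decomp_var (Good.closure hred hgood) z σ heq
      | app g ts =>
          obtain ⟨τ, h1, h2⟩ := ih _ σ hsig hlin heq
          exact ⟨τ, hred.trans h1, h2⟩

end GoodLemmas

section GoodUpeel

variable {α : Type u} {F : Set α} {R : Set (ERule α)} {u : ERule α → ℕ → α}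

/-- Inversion of `Good` at a U-rooted term. -/
theorem good_upeel (hfresh : UFresh F u R) {ρ : ERule α} {i : ℕ} {w0 : Term α}
    {ws : List (Term α)} {v : Term α} (hρ : ρ ∈ R) (hi : i < ρ.conds.length)
    (h : Good F R u (.app (u ρ i) (w0 :: ws)) v) :
    ∃ τ v0, ws.length = (seqOf (ρ.Zset i)).length ∧
      RedStar R v (ρ.lhs.subst τ) ∧
      (∀ j, j < i → RedStar R ((ρ.scond j).subst τ) ((ρ.tcond j).subst τ)) ∧
      Good F R u w0 v0 ∧ RedStar R ((ρ.scond i).subst τ) v0 ∧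
      (∀ j (hj : j < ws.length) (hj' : j < (seqOf (ρ.Zset i)).length),
        Good F R u ws[j] (τ ((seqOf (ρ.Zset i))[j]))) := by
  generalize hW : (Term.app (u ρ i) (w0 :: ws) : Term α) = W at h
  induction h with
  | var x => simp at hW
  | appF hf hl hg ih =>
      rename_i f ws' vs
      obtain ⟨rfl, -⟩ := Term.app.inj hW.symm
      exact absurd hf (hfresh.1 _ hρ _ hi)
  | appU hρ' hi' hlen hred hconds hg0 hs0 hargs ih0 ihargs =>
      rename_i ρ' i' w0' ws' v' v0 τ
      obtain ⟨hu, hlist⟩ := Term.app.inj hW.symm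
      obtain ⟨rfl, rfl⟩ := hfresh.2 ρ hρ ρ' hρ' i hi i' hi' hu.symm
      obtain ⟨rfl, rfl⟩ := List.cons.inj hlist
      exact ⟨τ, v0, hlen, hred, hconds, hg0, hs0, hargs⟩
  | closure hred hgood ih =>
      obtain ⟨τ, v0, h1, h2, h3, h4, h5, h6⟩ := ih hW
      exact ⟨τ, v0, h1, hred.trans h2, h3, h4, h5, h6⟩

end GoodUpeel

/-! ### Structure of the optimized unraveling -/

section Unravel

variable {α : Type u}

theorem mem_unravelOpt {ρ : ERule α} {u' : ℕ → α} {q : ERule α} :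
    q ∈ unravelOpt u' ρ ↔ ∃ j, j ≤ ρ.conds.length ∧
      q = ⟨if j = 0 then ρ.lhs else mkU (u' (j-1)) (ρ.tcond (j-1)) (seqOf (ρ.Zset (j-1))),
           if j < ρ.conds.length then mkU (u' j) (ρ.scond j) (seqOf (ρ.Zset j)) else ρ.rhs,
           []⟩ := by
  simp only [unravelOpt, unravelWith, List.mem_map, List.mem_range, ERule.scond, ERule.tcond]
  constructor
  · rintro ⟨j, hj, rfl⟩; exact ⟨j, by omega, rfl⟩
  · rintro ⟨j, hj, rfl⟩; exact ⟨j, by omega, rfl⟩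

theorem unravelOpt_conds_nil {ρ : ERule α} {u' : ℕ → α} {q : ERule α}
    (h : q ∈ unravelOpt u' ρ) : q.conds = [] := by
  rw [mem_unravelOpt] at h
  obtain ⟨j, hj, rfl⟩ := h
  rfl

theorem cond_mem {ρ : ERule α} {i : ℕ} (hi : i < ρ.conds.length) :
    ρ.conds.getD i junkPair ∈ ρ.conds := by
  rw [List.getD_eq_getElem _ _ hi]
  exact List.getElem_mem hi

theorem cond_overSig {F : Set α} {ρ : ERule α} (hs : ρ.overSig F) {i : ℕ}
    (hi : i < ρ.conds.length) : (ρ.scond i).overSig F ∧ (ρ.tcond i).overSig F :=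
  hs.2.2 _ (cond_mem hi)

theorem det_scond {ρ : ERule α} (hd : ρ.Det) {i : ℕ} (hi : i < ρ.conds.length) :
    (ρ.scond i).varFinset ⊆ ρ.Xset i := hd i hi

theorem type3_mem {ρ : ERule α} (h3 : ρ.Type3) {x : ℕ} (hx : x ∈ ρ.rhs.varFinset) :
    x ∈ ρ.lhs.varFinset ∨ ∃ j, j < ρ.conds.length ∧
      (x ∈ (ρ.scond j).varFinset ∨ x ∈ (ρ.tcond j).varFinset) := by
  have := h3 hx
  rw [Finset.mem_union, mem_foldr_union] at this
  rcases this with h | ⟨c, hc, hmem⟩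
  · exact Or.inl h
  · obtain ⟨j, hj, rfl⟩ := List.mem_iff_getElem.1 hc
    refine Or.inr ⟨j, hj, ?_⟩
    rw [Finset.mem_union] at hmem
    rcases hmem with h | h
    · exact Or.inl (by rw [ERule.scond, List.getD_eq_getElem _ _ hj]; exact h)
    · exact Or.inr (by rw [ERule.tcond, List.getD_eq_getElem _ _ hj]; exact h)

theorem mem_Zset {ρ : ERule α} {i x : ℕ} :
    x ∈ ρ.Zset i ↔ x ∈ ρ.Xset i ∧ x ∈ ρ.Yset i := Finset.mem_inter

/-- consequences of ultra-left-linearity for the `i`-th condition rhs -/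
theorem tcond_linear_facts {ρ : ERule α} {u' : ℕ → α} {i : ℕ}
    (hi : i < ρ.conds.length)
    (h : (mkU (u' i) (ρ.tcond i) (seqOf (ρ.Zset i))).Linear) :
    (ρ.tcond i).Linear ∧ ∀ x ∈ (ρ.tcond i).varFinset, x ∉ ρ.Xset i := by
  obtain ⟨h1, h2⟩ := linear_mkU h
  refine ⟨h1, fun x hx hX => ?_⟩
  have hY : x ∈ ρ.Yset i := ρ.tcond_sub_Yset i hx
  have hZ : x ∈ ρ.Zset i := mem_Zset.2 ⟨hX, hY⟩
  exact h2 x hx (mem_seqOf.2 hZ)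

theorem Zset_succ_sub {ρ : ERule α} {i : ℕ} (h : i + 1 < ρ.conds.length) {x : ℕ}
    (hx : x ∈ ρ.Zset (i + 1)) : x ∈ ρ.Zset i ∨ x ∈ (ρ.tcond i).varFinset := by
  rw [mem_Zset] at hx
  obtain ⟨hX, hY⟩ := hx
  rw [ERule.mem_Xset_succ (by omega)] at hX
  rcases hX with hX | hX
  · exact Or.inl (mem_Zset.2 ⟨hX, ρ.Yset_succ_sub h hY⟩)
  · exact Or.inr hX

end Unravel

section Root

variable {α : Type u} {F : Set α} {R : Set (ERule α)} {u : ERule α → ℕ → α}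

theorem lhs_sub_Xset (ρ : ERule α) (i : ℕ) : ρ.lhs.varFinset ⊆ ρ.Xset i :=
  fun _ hx => ERule.mem_Xset.2 (Or.inl hx)

theorem tcond_sub_Xset {ρ : ERule α} {j i : ℕ} (hj : j < i) (hjk : j < ρ.conds.length) :
    (ρ.tcond j).varFinset ⊆ ρ.Xset i :=
  fun x hx => ERule.mem_Xset'.2 (Or.inr ⟨j, hj, hjk, hx⟩)

/-- The root-step case of the simulation. -/
theorem good_root (hsig : ∀ ρ ∈ R, ρ.overSig F) (hdet : ∀ ρ ∈ R, ρ.Det ∧ ρ.Type3)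
    (hLL : ∀ ρ ∈ R, ∀ q ∈ unravelOpt (u ρ) ρ, q.LL) (hfresh : UFresh F u R)
    {q : ERule α} {σ' : ℕ → Term α} {v : Term α}
    (hq : q ∈ UoptSys u R) (h : Good F R u (q.lhs.subst σ') v) :
    ∃ v', RedStar R v v' ∧ Good F R u (q.rhs.subst σ') v' := by
  classical
  obtain ⟨ρ, hρ, hqmem⟩ := hq
  have hqLL := hLL ρ hρ q hqmem
  rw [mem_unravelOpt] at hqmem
  obtain ⟨j, hj, rfl⟩ := hqmem
  simp only [ERule.LL] at hqLL
  cases j with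
  | zero =>
      simp only [if_pos rfl] at h hqLL ⊢
      -- decompose Good at an instance of the (linear, over-F) lhs
      obtain ⟨τ, hvl, hgx⟩ :=
        good_decomp hfresh.1 h ρ.lhs σ' (hsig ρ hρ).1 hqLL rfl
      by_cases hk : 0 < ρ.conds.length
      · -- introduction rule l → U₁(s₁, Z₁)
        rw [if_pos hk]
        refine ⟨v, Relation.ReflTransGen.refl, ?_⟩
        rw [mkU_subst]
        refine Good.appU hρ hk (by simp) hvl (by omega)
          (good_subst (cond_overSig (hsig ρ hρ) hk).1 ?_) Relation.ReflTransGen.refl ?_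
        · intro x hx
          have : x ∈ ρ.lhs.varFinset := by
            have := det_scond (hdet ρ hρ).1 hk hx
            rwa [ρ.Xset_zero] at this
          exact hgx x this
        · intro j' hj' hj''
          simp only [List.getElem_map]
          have hz : (seqOf (ρ.Zset 0))[j'] ∈ ρ.Zset 0 := by
            rw [← mem_seqOf]
            exact List.getElem_mem hj''
          have hzl : (seqOf (ρ.Zset 0))[j'] ∈ ρ.lhs.varFinset := by
            rw [← ρ.Xset_zero]
            exact (mem_Zset.1 hz).1
          exact hgx _ hzl
      · -- unconditional rule, kept
        rw [if_neg hk]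
        have hnil : ρ.conds = [] := by
          rcases List.length_eq_zero_iff.1 (by omega : ρ.conds.length = 0) with h'
          exact h'
        refine ⟨ρ.rhs.subst τ, hvl.tail (red_rule hρ τ ?_), ?_⟩
        · intro c hc; rw [hnil] at hc; exact absurd hc List.not_mem_nil
        · refine good_subst (hsig ρ hρ).2.1 ?_
          intro x hx
          have h3 := (hdet ρ hρ).2 hx
          rw [hnil] at h3
          simp only [List.map_nil, List.foldr_nil, Finset.union_empty] at h3
          exact hgx x h3
  | succ i =>
      have hi : i < ρ.conds.length := by omega
      have hdetρ := (hdet ρ hρ).1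
      have hsigρ := hsig ρ hρ
      rw [if_neg (Nat.succ_ne_zero i), Nat.add_sub_cancel] at h hqLL
      rw [mkU_subst] at h
      -- peel the U-clause of `Good`
      obtain ⟨τ, v0, -, hred, hconds, hg0, hs0, hargs⟩ := good_upeel hfresh hρ hi h
      -- consequences of left-linearity
      obtain ⟨htlin, hdisj⟩ := tcond_linear_facts hi hqLL
      -- decompose the head
      obtain ⟨τ', hv0, hgx⟩ :=
        good_decomp hfresh.1 hg0 (ρ.tcond i) σ' (cond_overSig hsigρ hi).2 htlin rfl
      classical
      set τh : ℕ → Term α :=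
        fun x => if x ∈ (ρ.tcond i).varFinset then τ' x else τ x with hτh
      have agree : ∀ t₀ : Term α, t₀.varFinset ⊆ ρ.Xset i → t₀.subst τh = t₀.subst τ := by
        intro t₀ ht₀
        refine Term.subst_congr (fun x hx => ?_)
        rw [hτh]
        simp only []
        rw [if_neg (fun hmem => hdisj x hmem (ht₀ hx))]
      have agree_t : (ρ.tcond i).subst τh = (ρ.tcond i).subst τ' := by
        refine Term.subst_congr (fun x hx => ?_)
        rw [hτh]; simp only []; rw [if_pos hx]
      have hargsZ : ∀ x ∈ ρ.Zset i, Good F R u (σ' x) (τ x) := by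
        intro x hx
        obtain ⟨j', hj', hEq⟩ := List.mem_iff_getElem.1 (mem_seqOf.2 hx)
        have hjw : j' < (List.map σ' (seqOf (ρ.Zset i))).length := by simpa using hj'
        have hh := hargs j' hjw hj'
        rw [List.getElem_map, hEq] at hh
        exact hh
      have hGoodZT : ∀ x, (x ∈ ρ.Zset i ∨ x ∈ (ρ.tcond i).varFinset) →
          Good F R u (σ' x) (τh x) := by
        intro x hx
        by_cases hmem : x ∈ (ρ.tcond i).varFinset
        · rw [hτh]; simp only []; rw [if_pos hmem]; exact hgx x hmem
        · rcases hx with hx | hx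
          · rw [hτh]; simp only []; rw [if_neg hmem]; exact hargsZ x hx
          · exact absurd hx hmem
      have hcondsτh : ∀ j', j' < i + 1 →
          RedStar R ((ρ.scond j').subst τh) ((ρ.tcond j').subst τh) := by
        intro j' hj'
        rcases Nat.lt_or_ge j' i with hlt | hge
        · rw [agree _ (fun x hx => ERule.Xset_mono (by omega) (det_scond hdetρ (by omega) hx)),
            agree _ (tcond_sub_Xset hlt (by omega))]
          exact hconds j' hlt
        · have : j' = i := by omega
          subst this
          rw [agree _ (det_scond hdetρ hi), agree_t]
          exact (hs0.trans hv0)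
      have hredv : RedStar R v (ρ.lhs.subst τh) := by
        rw [agree _ (lhs_sub_Xset ρ i)]
        exact hred
      by_cases hmid : i + 1 < ρ.conds.length
      · -- middle rule
        rw [if_pos hmid]
        refine ⟨v, Relation.ReflTransGen.refl, ?_⟩
        rw [mkU_subst]
        refine Good.appU hρ hmid (by simp) hredv hcondsτh
          (good_subst (cond_overSig hsigρ hmid).1 ?_) Relation.ReflTransGen.refl ?_
        · intro x hx
          refine hGoodZT x ?_
          have hX := det_scond hdetρ hmid hx
          rw [ERule.mem_Xset_succ hi] at hX
          rcases hX with hX | hX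
          · exact Or.inl (mem_Zset.2 ⟨hX, ERule.scond_succ_sub_Yset hmid hx⟩)
          · exact Or.inr hX
        · intro j' hj' hj''
          simp only [List.getElem_map]
          have hz : (seqOf (ρ.Zset (i+1)))[j'] ∈ ρ.Zset (i+1) := by
            rw [← mem_seqOf]
            exact List.getElem_mem hj''
          exact hGoodZT _ (Zset_succ_sub hmid hz)
      · -- last rule
        rw [if_neg hmid]
        have hcondsAll : ∀ c ∈ ρ.conds, RedStar R (c.1.subst τh) (c.2.subst τh) := by
          intro c hc
          obtain ⟨j', hj', rfl⟩ := List.mem_iff_getElem.1 hc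
          have hh := hcondsτh j' (by omega)
          rwa [ERule.scond, ERule.tcond, List.getD_eq_getElem _ _ hj'] at hh
        refine ⟨ρ.rhs.subst τh, hredv.tail (red_rule hρ τh hcondsAll), ?_⟩
        refine good_subst hsigρ.2.1 ?_
        intro x hx
        refine hGoodZT x ?_
        have hY : x ∈ ρ.Yset i := ρ.rhs_sub_Yset i hx
        rcases type3_mem (hdet ρ hρ).2 hx with hX | ⟨j', hj', hst⟩
        · exact Or.inl (mem_Zset.2 ⟨lhs_sub_Xset ρ i hX, hY⟩)
        · rcases hst with hX | hX
          · exact Or.inl (mem_Zset.2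
              ⟨ERule.Xset_mono (by omega) (det_scond hdetρ hj' hX), hY⟩)
          · rcases Nat.lt_or_ge j' i with hlt | hge
            · exact Or.inl (mem_Zset.2 ⟨tcond_sub_Xset hlt (by omega) hX, hY⟩)
            · have : j' = i := by omega
              subst this
              exact Or.inr hX

end Root

/-! ### The main simulation step -/

theorem getElem_append_cons_eq {β : Type _} (pre post : List β) (a : β) :
    (pre ++ a :: post)[pre.length]'(by simp) = a := by
  rw [List.getElem_append_right (Nat.le_refl _)]
  simp

theorem getElem_append_cons_ne {β : Type _} (pre post : List β) (a b : β) (i : ℕ)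
    (hne : i ≠ pre.length) (hi : i < (pre ++ a :: post).length)
    (hi' : i < (pre ++ b :: post).length) :
    (pre ++ a :: post)[i] = (pre ++ b :: post)[i] := by
  induction pre generalizing i with
  | nil =>
      cases i with
      | zero => simp at hne
      | succ d => simp
  | cons p pre ih =>
      cases i with
      | zero => simp
      | succ d =>
          simp only [List.cons_append, List.getElem_cons_succ]
          exact ih d (by simpa using hne) (by simpa using hi) (by simpa using hi')

@[simp] theorem Ctx.plug_hole {α : Type u} (t : Term α) : (Ctx.hole : Ctx α).plug t = t := rfl

@[simp] theorem Ctx.plug_app {α : Type u} (f : α) (pre post : List (Term α)) (c : Ctx α)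
    (t : Term α) : (Ctx.app f pre c post).plug t = .app f (pre ++ c.plug t :: post) := rfl

section Step

variable {α : Type u} {F : Set α} {R : Set (ERule α)} {u : ERule α → ℕ → α}

theorem good_step (hsig : ∀ ρ ∈ R, ρ.overSig F) (hdet : ∀ ρ ∈ R, ρ.Det ∧ ρ.Type3)
    (hLL : ∀ ρ ∈ R, ∀ q ∈ unravelOpt (u ρ) ρ, q.LL) (hfresh : UFresh F u R)
    {w v : Term α} (h : Good F R u w v) :
    ∀ (C : Ctx α) (q : ERule α) (σ' : ℕ → Term α), q ∈ UoptSys u R →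
      w = C.plug (q.lhs.subst σ') →
      ∃ v', RedStar R v v' ∧ Good F R u (C.plug (q.rhs.subst σ')) v' := by
  induction h with
  | var x =>
      intro C q σ' hq heq
      cases C with
      | hole =>
          simp only [Ctx.plug_hole] at heq ⊢
          exact good_root hsig hdet hLL hfresh hq (by rw [← heq]; exact Good.var x)
      | app g pre c post => simp only [Ctx.plug_app] at heq; exact absurd heq (by simp)
  | appF hf hl hg ih =>
      rename_i f ws vs
      intro C q σ' hq heq
      cases C with
      | hole =>
          simp only [Ctx.plug_hole] at heq ⊢
          exact good_root hsig hdet hLL hfresh hq (by rw [← heq]; exact Good.appF hf hl hg)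
      | app g pre c post =>
          simp only [Ctx.plug_app] at heq ⊢
          obtain ⟨rfl, rfl⟩ := Term.app.inj heq
          have hm : pre.length < (pre ++ c.plug (q.lhs.subst σ') :: post).length := by simp
          have hmv : pre.length < vs.length := by
            rw [← hl]; exact hm
          have hWm : (pre ++ c.plug (q.lhs.subst σ') :: post)[pre.length] =
              c.plug (q.lhs.subst σ') := getElem_append_cons_eq _ _ _
          obtain ⟨v'', hred'', hGood''⟩ := ih pre.length hm hmv c q σ' hq hWm
          refine ⟨.app f (vs.set pre.length v''), ?_, ?_⟩
          · refine redstar_app_pointwise f vs _ (by simp) ?_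
            intro i hi hi'
            rw [List.getElem_set]
            by_cases hieq : pre.length = i
            · subst hieq; rw [if_pos rfl]; exact hred''
            · rw [if_neg hieq]; exact Relation.ReflTransGen.refl
          · refine Good.appF hf (by simp_all) ?_
            intro i hi hi'
            rw [List.getElem_set]
            by_cases hieq : pre.length = i
            · subst hieq
              rw [if_pos rfl, getElem_append_cons_eq]
              exact hGood''
            · rw [if_neg hieq]
              have hiw : i < (pre ++ c.plug (q.lhs.subst σ') :: post).length := by
                simp at hi ⊢; omega
              rw [getElem_append_cons_ne pre post _ (c.plug (q.lhs.subst σ')) i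
                (fun hh => hieq hh.symm) hi hiw]
              exact hg i hiw (by rw [← hl]; exact hiw)
  | appU hρ' hi' hlen hred hconds hg0 hs0 hargs ih0 ihargs =>
      rename_i ρ' i' w0 ws v₁ v0 τ
      intro C q σ' hq heq
      cases C with
      | hole =>
          simp only [Ctx.plug_hole] at heq ⊢
          exact good_root hsig hdet hLL hfresh hq
            (by rw [← heq]; exact Good.appU hρ' hi' hlen hred hconds hg0 hs0 hargs)
      | app g pre c post =>
          simp only [Ctx.plug_app] at heq ⊢
          obtain ⟨rfl, hlist⟩ := Term.app.inj heq
          cases pre with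
          | nil =>
              simp only [List.nil_append] at hlist ⊢
              obtain ⟨rfl, rfl⟩ := List.cons.inj hlist
              obtain ⟨v0', hred0, hGood0⟩ := ih0 c q σ' hq rfl
              exact ⟨v₁, Relation.ReflTransGen.refl,
                Good.appU hρ' hi' hlen hred hconds hGood0 (hs0.trans hred0) hargs⟩
          | cons p0 pre' =>
              simp only [List.cons_append] at hlist ⊢
              obtain ⟨rfl, rfl⟩ := List.cons.inj hlist
              have hm : pre'.length < (pre' ++ c.plug (q.lhs.subst σ') :: post).length := by
                simp
              have hmz : pre'.length < (seqOf (ρ'.Zset i')).length := by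
                rw [← hlen]; exact hm
              have hWm : (pre' ++ c.plug (q.lhs.subst σ') :: post)[pre'.length] =
                  c.plug (q.lhs.subst σ') := getElem_append_cons_eq _ _ _
              obtain ⟨vz', hredz, hGoodz⟩ := ihargs pre'.length hm hmz c q σ' hq hWm
              refine ⟨v₁, Relation.ReflTransGen.refl, ?_⟩
              refine Good.appU hρ' hi' (by simpa using hlen) hred hconds hg0 hs0 ?_
              intro j hj hj'
              by_cases hjeq : j = pre'.length
              · subst hjeq
                rw [getElem_append_cons_eq]
                exact Good.closure hredz hGoodz
              · have hjw : j < (pre' ++ c.plug (q.lhs.subst σ') :: post).length := by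
                  simp at hj ⊢; omega
                rw [getElem_append_cons_ne pre' post _ (c.plug (q.lhs.subst σ')) j hjeq hj hjw]
                exact hargs j hjw hj'
  | closure hred hgood ih =>
      intro C q σ' hq heq
      obtain ⟨v', h1, h2⟩ := ih C q σ' hq heq
      exact ⟨v', hred.trans h1, h2⟩

end Step

section Assembly

variable {α : Type u} {R : Set (ERule α)} {u : ERule α → ℕ → α}

theorem red_uopt_elim {w w' : Term α} (h : Red (UoptSys u R) w w') :
    ∃ q ∈ UoptSys u R, ∃ (C : Ctx α) (σ' : ℕ → Term α),
      w = C.plug (q.lhs.subst σ') ∧ w' = C.plug (q.rhs.subst σ') := by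
  obtain ⟨n, h⟩ := h
  induction n with
  | zero => exact absurd h (by simp [RedN])
  | succ n ih =>
      rcases h with h | ⟨q, hq, C, σ', hs, ht, -⟩
      · exact ih h
      · exact ⟨q, hq, C, σ', hs, ht⟩

end Assembly
/-- The optimized unraveling `U_opt` is sound for every `U_opt`-LL
3-eDCTRS `R` over a signature `F` that is non-LV or non-RV: for all terms
`s, t ∈ T(F,V)`, `s →*_{U_opt(R)} t` implies `s →*_R t`. -/
theorem uopt_sound_of_ultraLL_type3 {α : Type u} (F : Set α) (R : Set (ERule α))
    (u : ERule α → ℕ → α)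
    (hsig : ∀ ρ ∈ R, ρ.overSig F)
    (hdet : ∀ ρ ∈ R, ρ.Det ∧ ρ.Type3)
    (hLL : ∀ ρ ∈ R, ∀ q ∈ unravelOpt (u ρ) ρ, q.LL)
    (hfresh : UFresh F u R)
    (hnv : (∀ ρ ∈ R, ρ.nonLV) ∨ (∀ ρ ∈ R, ρ.nonRV)) :
    ∀ s t : Term α, s.overSig F → t.overSig F →
      RedStar (UoptSys u R) s t → RedStar R s t := by
  intro s t hsF htF hstar
  have main : ∃ v, RedStar R s v ∧ Good F R u t v := by
    clear htF
    induction hstar with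
    | refl => exact ⟨s, Relation.ReflTransGen.refl, good_refl hsF⟩
    | tail hab hbc ih =>
        obtain ⟨v, hr, hgood⟩ := ih
        obtain ⟨q, hq, C, σ', hw, hw'⟩ := red_uopt_elim hbc
        obtain ⟨v', hr2, hgood'⟩ := good_step hsig hdet hLL hfresh hgood C q σ' hq hw
        rw [hw']
        exact ⟨v', hr.trans hr2, hgood'⟩
  obtain ⟨v, hr, hgood⟩ := main
  exact hr.trans (good_overF hfresh.1 hgood htF)
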